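/- Let U be a group, A an abelian group acting on U by automorphisms, and suppose a ∈ A admits a vacuum subset Ω (a compact subset of U, where U is a topological group, such that for every compact K ⊆ U there exists n > 0 with aⁿ·K·a⁻ⁿ ⊆ Ω). If U is compactly generated, then there exist b ∈ A (a power of a) and a compact generating set S of U containing the identity such that b·(S·S)·b⁻¹ ⊆ S. -/

import Mathlib

open Pointwise

/-- If `a ∈ A` acts on the compactly generated topological group `U` with a vacuum
subset `Ω`, then some power `b = aᵐ` of `a` and some compact generating set `S ∋ 1`
of `U` satisfy `b·(S·S)·b⁻¹ ⊆ S`. -/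
theorem tame_contracting_generating_set {U A : Type*} [Group U] [TopologicalSpace U]
    [IsTopologicalGroup U] [BaireSpace U] [CommGroup A]
    (φ : A →* MulAut U) (hcont : ∀ b : A, Continuous (φ b))
    (a : A) (Ω : Set U) (hΩ : IsCompact Ω)
    (hvac : ∀ K : Set U, IsCompact K → ∃ n : ℕ, 0 < n ∧ φ (a ^ n) '' K ⊆ Ω)
    (S₀ : Set U) (hS₀ : IsCompact S₀) (hS₀symm : S₀⁻¹ = S₀) (hS₀one : (1:U) ∈ S₀)
    (hgen : Subgroup.closure S₀ = ⊤) :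
    ∃ m : ℕ, 0 < m ∧ ∃ S : Set U, IsCompact S ∧ (1:U) ∈ S ∧
      Subgroup.closure S = ⊤ ∧ φ (a ^ m) '' (S * S) ⊆ S := by
  obtain ⟨m, hm, hsub⟩ := hvac ((S₀ ∪ Ω) * (S₀ ∪ Ω)) ((hS₀.union hΩ).mul (hS₀.union hΩ))
  refine ⟨m, hm, S₀ ∪ Ω, hS₀.union hΩ, Or.inl hS₀one, ?_,
    fun x hx => Or.inr (hsub hx)⟩
  exact top_unique (hgen ▸ Subgroup.closure_mono Set.subset_union_left)
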